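/- Let w* be any global minimizer of the overall loss L over the nonnegative orthant. Then for all indices i, j, if A_i < A_j then w*_i ≥ w*_j; that is, at a global minimum the weights are (weakly) monotonically decreasing in the parameter norms, so more efficient circuits never receive less weight than less efficient circuits. -/
import Mathlib


open Real

/-- At any global minimizer `w` over the nonnegative orthant of the
overall loss `L w = T (∑ i, w i) + (lam / q) * ∑ i, ((w i)^(1/k) * A i)^q`, the weights
are weakly monotonically decreasing in the parameter norms: `A i < A j → w i ≥ w j`. -/
theorem minimizer_weights_antitone_in_norms
    {n : ℕ} (hn : 1 ≤ n) (A : Fin n → ℝ) (hA : ∀ i, 0 < A i)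
    (lam q k : ℝ) (hlam : 0 < lam) (hq : 0 < q) (hk : 0 < k)
    (T : ℝ → ℝ)
    (w : Fin n → ℝ) (hw : ∀ i, 0 ≤ w i)
    (hmin : ∀ v : Fin n → ℝ, (∀ i, 0 ≤ v i) →
      T (∑ i, w i) + (lam / q) * ∑ i, ((w i) ^ (1 / k) * A i) ^ q ≤
        T (∑ i, v i) + (lam / q) * ∑ i, ((v i) ^ (1 / k) * A i) ^ q) :
    ∀ i j, A i < A j → w i ≥ w j := by
  intro i j hAij
  by_contra hcon
  push_neg at hcon
  have hij : i ≠ j := fun h => by rw [h] at hAij; exact lt_irrefl _ hAij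
  set v : Fin n → ℝ := w ∘ Equiv.swap i j with hv
  have hv0 : ∀ l, 0 ≤ v l := fun l => hw _
  have hsum : ∑ l, v l = ∑ l, w l := Fintype.sum_equiv (Equiv.swap i j) _ _ (fun l => rfl)
  have hvi : v i = w j := by simp [hv, Equiv.swap_apply_left]
  have hvj : v j = w i := by simp [hv, Equiv.swap_apply_right]
  -- penalty comparison
  have key : ∑ l, ((v l) ^ (1 / k) * A l) ^ q < ∑ l, ((w l) ^ (1 / k) * A l) ^ q := by
    have hdiff : ∑ l, (((v l) ^ (1 / k) * A l) ^ q - ((w l) ^ (1 / k) * A l) ^ q)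
        = (((v i) ^ (1 / k) * A i) ^ q - ((w i) ^ (1 / k) * A i) ^ q)
          + (((v j) ^ (1 / k) * A j) ^ q - ((w j) ^ (1 / k) * A j) ^ q) := by
      refine Finset.sum_eq_add i j hij ?_ ?_ ?_
      · intro c _ hc
        have : v c = w c := by
          simp [hv, Equiv.swap_apply_of_ne_of_ne hc.1 hc.2]
        rw [this]; ring
      · intro h; exact absurd (Finset.mem_univ i) h
      · intro h; exact absurd (Finset.mem_univ j) h
    have ha : (w i) ^ (1 / k) < (w j) ^ (1 / k) :=
      Real.rpow_lt_rpow (hw i) hcon (by positivity)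
    have ha0 : 0 ≤ (w i) ^ (1 / k) := Real.rpow_nonneg (hw i) _
    have hb0 : 0 ≤ (w j) ^ (1 / k) := Real.rpow_nonneg (hw j) _
    have haq : ((w i) ^ (1 / k)) ^ q < ((w j) ^ (1 / k)) ^ q :=
      Real.rpow_lt_rpow ha0 ha hq
    have hAq : (A i) ^ q < (A j) ^ q :=
      Real.rpow_lt_rpow (hA i).le hAij hq
    have hAq0 : 0 ≤ (A i) ^ q := Real.rpow_nonneg (hA i).le _
    have hsplit : ∀ x y : ℝ, 0 ≤ x → 0 ≤ y → (x * y) ^ q = x ^ q * y ^ q :=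
      fun x y hx hy => Real.mul_rpow hx hy
    have hneg : (((v i) ^ (1 / k) * A i) ^ q - ((w i) ^ (1 / k) * A i) ^ q)
          + (((v j) ^ (1 / k) * A j) ^ q - ((w j) ^ (1 / k) * A j) ^ q) < 0 := by
      rw [hvi, hvj,
        hsplit _ _ hb0 (hA i).le, hsplit _ _ ha0 (hA i).le,
        hsplit _ _ ha0 (hA j).le, hsplit _ _ hb0 (hA j).le]
      nlinarith [haq, hAq, hAq0]
    have := Finset.sum_sub_distrib (f := fun l => ((v l) ^ (1 / k) * A l) ^ q)
      (g := fun l => ((w l) ^ (1 / k) * A l) ^ q) (s := Finset.univ)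
    rw [this] at hdiff
    linarith [hdiff, hneg]
  have hle := hmin v hv0
  rw [hsum] at hle
  have hc : 0 < lam / q := div_pos hlam hq
  nlinarith [key, hc, mul_lt_mul_of_pos_left key hc]
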